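/- Assume κ¹ ≤ 0 < κ⁰ and that the pair is nondegenerate. Then for indices (i,j) ≠ (1,1), the function σ_{i,j} has a zero in (0,∞) if and only if ρ⁰_i < κ⁰/(m−1) and ρ¹_j > κ¹/(m−1); moreover the degeneracy set Λ = { λ ∈ (0,∞) : σ_{i,j}(λ) = 0 for some (i,j) ≠ (1,1) } is infinite, bounded away from 0, has no accumulation points in (0,∞), and is unbounded above; equivalently, Λ is the range of a strictly increasing sequence tending to +∞. -/

import Mathlib

open Set Filter

theorem aux_enum_12 (S : Set ℝ) (hfin : ∀ M : ℝ, (S ∩ Set.Iic M).Finite)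
    (hinf : S.Infinite) :
    ∃ u : ℕ → ℝ, StrictMono u ∧ Filter.Tendsto u Filter.atTop Filter.atTop ∧
      S = Set.range u := by
  have hnb : ∀ x : ℝ, (S ∩ Set.Ioi x).Nonempty := by
    intro x
    rcases Set.eq_empty_or_nonempty (S ∩ Set.Ioi x) with h | h
    · exfalso
      apply hinf
      refine (hfin x).subset ?_
      intro z hz
      refine ⟨hz, ?_⟩
      by_contra hlt
      exact Set.eq_empty_iff_forall_notMem.mp h z ⟨hz, lt_of_not_ge (by simpa using hlt)⟩
    · exact h
  have key : ∀ x : ℝ, ∃ y, y ∈ S ∧ x < y ∧ ∀ z ∈ S, x < z → y ≤ z := by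
    intro x
    obtain ⟨y₀, hy₀S, hy₀⟩ := hnb x
    have hTfin : (S ∩ Set.Ioc x y₀).Finite :=
      (hfin y₀).subset (fun z hz => ⟨hz.1, hz.2.2⟩)
    have hTne : (S ∩ Set.Ioc x y₀).Nonempty := ⟨y₀, hy₀S, hy₀, le_refl y₀⟩
    obtain ⟨y, hyT, hymin⟩ := Set.exists_min_image _ id hTfin hTne
    refine ⟨y, hyT.1, hyT.2.1, ?_⟩
    intro z hzS hxz
    by_cases hz : z ≤ y₀
    · exact hymin z ⟨hzS, hxz, hz⟩
    · exact le_trans hyT.2.2 (le_of_not_ge hz)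
  choose f hf1 hf2 hf3 using key
  obtain ⟨s₀, hs₀⟩ := hinf.nonempty
  have hT₀fin : (S ∩ Set.Iic s₀).Finite := hfin s₀
  have hT₀ne : (S ∩ Set.Iic s₀).Nonempty := ⟨s₀, hs₀, Set.mem_Iic.mpr (le_refl _)⟩
  obtain ⟨m₀, hm₀T, hm₀min⟩ := Set.exists_min_image _ id hT₀fin hT₀ne
  have hm₀S : m₀ ∈ S := hm₀T.1
  have hm₀ : ∀ z ∈ S, m₀ ≤ z := by
    intro z hz
    by_cases h : z ≤ s₀
    · exact hm₀min z ⟨hz, h⟩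
    · exact le_trans hm₀T.2 (le_of_not_ge h)
  set u : ℕ → ℝ := fun n => Nat.rec m₀ (fun _ x => f x) n with hu
  have hu0 : u 0 = m₀ := rfl
  have husucc : ∀ n, u (n + 1) = f (u n) := fun n => rfl
  have humono : StrictMono u := by
    apply strictMono_nat_of_lt_succ
    intro n
    rw [husucc]
    exact hf2 (u n)
  have humem : ∀ n, u n ∈ S := by
    intro n
    induction n with
    | zero => exact hm₀S
    | succ k ih => rw [husucc]; exact hf1 (u k)
  have hsurj : ∀ s ∈ S, ∃ n, u n = s := by
    have main : ∀ N : ℕ, ∀ s ∈ S, (S ∩ Set.Iio s).ncard = N → ∃ n, u n = s := by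
      intro N
      induction N using Nat.strong_induction_on with
      | _ N ih =>
        intro s hs hcard
        by_cases hsm : s = m₀
        · exact ⟨0, hsm.symm⟩
        · have hTfin : (S ∩ Set.Iio s).Finite :=
            (hfin s).subset (fun z hz => ⟨hz.1, Set.mem_Iic.mpr (le_of_lt (Set.mem_Iio.mp hz.2))⟩)
          have hTne : (S ∩ Set.Iio s).Nonempty :=
            ⟨m₀, hm₀S, lt_of_le_of_ne (hm₀ s hs) (Ne.symm hsm)⟩
          obtain ⟨t, htT, htmax⟩ := Set.exists_max_image _ id hTfin hTne
          have hsub : S ∩ Set.Iio t ⊂ S ∩ Set.Iio s := by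
            constructor
            · intro z hz
              exact ⟨hz.1, Set.mem_Iio.mpr (lt_trans (Set.mem_Iio.mp hz.2) (Set.mem_Iio.mp htT.2))⟩
            · intro hcon
              exact absurd (hcon htT).2 (lt_irrefl t)
          have hlt : (S ∩ Set.Iio t).ncard < N := by
            rw [← hcard]
            exact Set.ncard_lt_ncard hsub hTfin
          obtain ⟨n, hn⟩ := ih _ hlt t htT.1 rfl
          refine ⟨n + 1, ?_⟩
          rw [husucc, hn]
          have h1 : f t ≤ s := hf3 t s hs htT.2
          rcases lt_or_eq_of_le h1 with h2 | h2
          · exfalso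
            have : f t ≤ t := htmax (f t) ⟨hf1 t, h2⟩
            exact absurd (hf2 t) (not_lt_of_ge this)
          · exact h2
    intro s hs
    exact main _ s hs rfl
  have hrange : S = Set.range u := by
    ext s
    constructor
    · intro hs
      obtain ⟨n, hn⟩ := hsurj s hs
      exact ⟨n, hn⟩
    · rintro ⟨n, rfl⟩
      exact humem n
  refine ⟨u, humono, ?_, hrange⟩
  apply tendsto_atTop_atTop_of_monotone humono.monotone
  intro b
  obtain ⟨y, hyS, hy⟩ := hnb b
  obtain ⟨n, hn⟩ := hsurj y hyS
  exact ⟨n, by rw [hn]; exact le_of_lt hy⟩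



theorem stmt_12
    (m : ℕ) (hm : 3 ≤ m)
    (κ₀ κ₁ : ℝ)
    (ρ₀ ρ₁ : ℕ → ℝ)
    (hρ₀one : ρ₀ 1 = 0) (hρ₁one : ρ₁ 1 = 0)
    (hρ₀mono : ∀ i j : ℕ, 1 ≤ i → i < j → ρ₀ i < ρ₀ j)
    (hρ₁mono : ∀ i j : ℕ, 1 ≤ i → i < j → ρ₁ i < ρ₁ j)
    (hρ₀unb : ∀ C : ℝ, ∃ i : ℕ, 1 ≤ i ∧ C < ρ₀ i)
    (hρ₁unb : ∀ C : ℝ, ∃ j : ℕ, 1 ≤ j ∧ C < ρ₁ j)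
    (σ : ℕ → ℕ → ℝ → ℝ)
    (hσ : ∀ (i j : ℕ) (l : ℝ), 0 < l →
      σ i j l = ρ₀ i + ρ₁ j / l - (κ₀ + κ₁ / l) / ((m : ℝ) - 1))
    (istar jstar : ℕ)
    (histar1 : 1 ≤ istar) (histar2 : κ₀ / ((m : ℝ) - 1) ≤ ρ₀ istar)
    (histar3 : ∀ i : ℕ, 1 ≤ i → i < istar → ρ₀ i < κ₀ / ((m : ℝ) - 1))
    (hjstar1 : 1 ≤ jstar) (hjstar2 : κ₁ / ((m : ℝ) - 1) ≤ ρ₁ jstar)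
    (hjstar3 : ∀ j : ℕ, 1 ≤ j → j < jstar → ρ₁ j < κ₁ / ((m : ℝ) - 1))
    (hnondeg : ¬ (ρ₀ istar = κ₀ / ((m : ℝ) - 1) ∧ ρ₁ jstar = κ₁ / ((m : ℝ) - 1)))
    (Λ : Set ℝ)
    (hΛ : Λ = {l : ℝ | 0 < l ∧ ∃ i j : ℕ, 1 ≤ i ∧ 1 ≤ j ∧ (i, j) ≠ (1, 1) ∧ σ i j l = 0})
    (hκ₀ : 0 < κ₀) (hκ₁ : κ₁ ≤ 0) :
    (∀ i j : ℕ, 1 ≤ i → 1 ≤ j → (i, j) ≠ (1, 1) →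
      ((∃ l : ℝ, 0 < l ∧ σ i j l = 0) ↔
        (ρ₀ i < κ₀ / ((m : ℝ) - 1) ∧ κ₁ / ((m : ℝ) - 1) < ρ₁ j))) ∧
    Λ.Infinite ∧ (∃ c > (0 : ℝ), ∀ l ∈ Λ, c ≤ l) ∧
    (∀ x : ℝ, 0 < x → ∃ ε > (0 : ℝ), ∀ l ∈ Λ, l ≠ x → ε ≤ |l - x|) ∧
    ¬ BddAbove Λ ∧
    (∃ u : ℕ → ℝ, StrictMono u ∧ Filter.Tendsto u Filter.atTop Filter.atTop ∧
      Λ = Set.range u) := by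
  set K₀ : ℝ := κ₀ / ((m : ℝ) - 1) with hK₀def
  set K₁ : ℝ := κ₁ / ((m : ℝ) - 1) with hK₁def
  have hm1 : (0 : ℝ) < (m : ℝ) - 1 := by
    have : (3 : ℝ) ≤ (m : ℝ) := by exact_mod_cast hm
    linarith
  have hK₀pos : 0 < K₀ := div_pos hκ₀ hm1
  have hK₁np : K₁ ≤ 0 := div_nonpos_iff.mpr (Or.inr ⟨hκ₁, le_of_lt hm1⟩)
  have hρ₁nonneg : ∀ j : ℕ, 1 ≤ j → 0 ≤ ρ₁ j := by
    intro j hj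
    rcases Nat.lt_or_ge 1 j with h | h
    · exact le_of_lt (hρ₁one ▸ hρ₁mono 1 j le_rfl h)
    · have : j = 1 := le_antisymm h hj
      rw [this, hρ₁one]
  have hρ₀nonneg : ∀ i : ℕ, 1 ≤ i → 0 ≤ ρ₀ i := by
    intro i hi
    rcases Nat.lt_or_ge 1 i with h | h
    · exact le_of_lt (hρ₀one ▸ hρ₀mono 1 i le_rfl h)
    · have : i = 1 := le_antisymm h hi
      rw [this, hρ₀one]
  have hjstar : jstar = 1 := by
    by_contra h
    have h2 : 2 ≤ jstar := by omega
    have := hjstar3 1 le_rfl (by omega)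
    rw [hρ₁one] at this
    linarith
  have histar' : 2 ≤ istar := by
    by_contra h
    have : istar = 1 := by omega
    rw [this, hρ₀one] at histar2
    linarith
  -- rewrite σ in a convenient form
  have hσ' : ∀ (i j : ℕ) (l : ℝ), 0 < l →
      σ i j l = (ρ₀ i - K₀) + (ρ₁ j - K₁) / l := by
    intro i j l hl
    rw [hσ i j l hl, hK₀def, hK₁def]
    field_simp
    ring
  -- zero characterization
  have hzero : ∀ (i j : ℕ) (l : ℝ), 1 ≤ i → 1 ≤ j → (i, j) ≠ (1, 1) → 0 < l →
      σ i j l = 0 → ρ₀ i < K₀ ∧ K₁ < ρ₁ j ∧ l = (ρ₁ j - K₁) / (K₀ - ρ₀ i) := by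
    intro i j l hi hj hij hl h0
    rw [hσ' i j l hl] at h0
    have hBnn : 0 ≤ ρ₁ j - K₁ := by
      have := hρ₁nonneg j hj
      linarith
    have hBpos : 0 < ρ₁ j - K₁ := by
      rcases lt_or_eq_of_le hBnn with h | h
      · exact h
      · exfalso
        -- ρ₁ j = K₁, but ρ₁ j ≥ 0 ≥ K₁ so both are 0
        have hρj : ρ₁ j = K₁ := by linarith
        have hρj0 : ρ₁ j = 0 := le_antisymm (by linarith [hρ₁nonneg j hj]) (hρ₁nonneg j hj)
        have hK₁0 : K₁ = 0 := by linarith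
        have hj1 : j = 1 := by
          by_contra hjne
          have := hρ₁mono 1 j le_rfl (by omega)
          rw [hρ₁one] at this
          linarith
        have hi1 : i ≠ 1 := by
          intro hi1
          exact hij (by rw [hi1, hj1])
        -- from σ = 0 get ρ₀ i = K₀
        have hA : ρ₀ i - K₀ = 0 := by
          have : (ρ₁ j - K₁) / l = 0 := by rw [← h]; simp
          linarith [h0, this]
        -- nondegeneracy: ρ₀ istar ≠ K₀
        have hist : ρ₀ istar ≠ K₀ := by
          intro hc
          apply hnondeg
          refine ⟨hc, ?_⟩
          rw [hjstar, hρ₁one, ← hK₁0]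
        rcases lt_trichotomy i istar with h1 | h1 | h1
        · have := histar3 i hi h1
          linarith
        · exact hist (by rw [← h1]; linarith)
        · have := hρ₀mono istar i histar1 h1
          have : ρ₀ istar < K₀ := by linarith
          linarith
    have hApos : ρ₀ i - K₀ < 0 := by
      have hq : 0 < (ρ₁ j - K₁) / l := div_pos hBpos hl
      linarith
    refine ⟨by linarith, by linarith, ?_⟩
    have hne : K₀ - ρ₀ i ≠ 0 := by linarith
    have hl0 : l ≠ 0 := ne_of_gt hl
    have h0' : (ρ₀ i - K₀) * l + (ρ₁ j - K₁) = 0 := by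
      have h2 := congrArg (· * l) h0
      simp only [add_mul, zero_mul] at h2
      rw [div_mul_cancel₀ _ hl0] at h2
      linarith
    rw [eq_div_iff hne]
    linear_combination -h0'
  -- (1) the iff
  have hiff : ∀ i j : ℕ, 1 ≤ i → 1 ≤ j → (i, j) ≠ (1, 1) →
      ((∃ l : ℝ, 0 < l ∧ σ i j l = 0) ↔ (ρ₀ i < K₀ ∧ K₁ < ρ₁ j)) := by
    intro i j hi hj hij
    constructor
    · rintro ⟨l, hl, h0⟩
      obtain ⟨h1, h2, _⟩ := hzero i j l hi hj hij hl h0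
      exact ⟨h1, h2⟩
    · rintro ⟨h1, h2⟩
      refine ⟨(ρ₁ j - K₁) / (K₀ - ρ₀ i), div_pos (by linarith) (by linarith), ?_⟩
      rw [hσ' i j _ (div_pos (by linarith) (by linarith))]
      have hB : ρ₁ j - K₁ ≠ 0 := by linarith
      have hA : K₀ - ρ₀ i ≠ 0 := by linarith
      field_simp
      ring
  -- every Λ element is positive
  have hΛpos : ∀ l ∈ Λ, 0 < l := by
    intro l hl
    rw [hΛ] at hl
    exact hl.1
  -- finiteness of truncations
  have hΛfin : ∀ M : ℝ, (Λ ∩ Set.Iic M).Finite := by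
    intro M
    obtain ⟨j₀, hj₀1, hj₀⟩ := hρ₁unb (M * K₀ + K₁)
    have himg : ((Set.Iio istar ×ˢ Set.Iio j₀ : Set (ℕ × ℕ))).Finite :=
      (Set.finite_Iio istar).prod (Set.finite_Iio j₀)
    refine (himg.image (fun p : ℕ × ℕ => (ρ₁ p.2 - K₁) / (K₀ - ρ₀ p.1))).subset ?_
    rintro l ⟨hlΛ, hlM⟩
    rw [hΛ] at hlΛ
    obtain ⟨hl, i, j, hi, hj, hij, h0⟩ := hlΛ
    obtain ⟨h1, h2, h3⟩ := hzero i j l hi hj hij hl h0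
    have hiistar : i < istar := by
      by_contra h
      have hge : istar ≤ i := by omega
      rcases Nat.lt_or_ge istar i with h' | h'
      · have := hρ₀mono istar i histar1 h'
        linarith
      · have : i = istar := by omega
        rw [this] at h1
        linarith
    have hjj₀ : j < j₀ := by
      by_contra h
      have hge : j₀ ≤ j := by omega
      have hρge : M * K₀ + K₁ < ρ₁ j := by
        rcases Nat.lt_or_ge j₀ j with h' | h'
        · exact lt_trans hj₀ (hρ₁mono j₀ j hj₀1 h')
        · have : j = j₀ := by omega
          rw [this]; exact hj₀
      -- l = (ρ₁ j - K₁)/(K₀ - ρ₀ i) ≤ M, K₀ - ρ₀ i ≤ K₀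
      have hden : 0 < K₀ - ρ₀ i := by linarith
      have hdenle : K₀ - ρ₀ i ≤ K₀ := by
        have := hρ₀nonneg i hi
        linarith
      have hBle : ρ₁ j - K₁ = l * (K₀ - ρ₀ i) := by
        rw [h3]
        field_simp
      have hlpos : 0 < l := hl
      have : l * (K₀ - ρ₀ i) ≤ M * K₀ := by
        calc l * (K₀ - ρ₀ i) ≤ M * (K₀ - ρ₀ i) :=
              mul_le_mul_of_nonneg_right hlM (le_of_lt hden)
          _ ≤ M * K₀ := by
              have hMpos : 0 < M := lt_of_lt_of_le hl hlM
              exact mul_le_mul_of_nonneg_left hdenle (le_of_lt hMpos)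
      rw [← hBle] at this
      linarith
    exact ⟨(i, j), ⟨hiistar, hjj₀⟩, h3.symm⟩
  -- infinitude
  have hΛinf : Λ.Infinite := by
    apply Set.infinite_of_injective_forall_mem
      (f := fun n : ℕ => (ρ₁ (n + 2) - K₁) / K₀)
    · intro a b hab
      have : ρ₁ (a + 2) = ρ₁ (b + 2) := by
        field_simp at hab
        linarith
      by_contra hne
      rcases Nat.lt_or_ge a b with h | h
      · have := hρ₁mono (a + 2) (b + 2) (by omega) (by omega)
        linarith
      · have hba : b < a := by omega
        have := hρ₁mono (b + 2) (a + 2) (by omega) (by omega)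
        linarith
    · intro n
      rw [hΛ]
      have hBpos : 0 < ρ₁ (n + 2) - K₁ := by
        have := hρ₁mono 1 (n + 2) le_rfl (by omega)
        rw [hρ₁one] at this
        linarith
      have hlpos : 0 < (ρ₁ (n + 2) - K₁) / K₀ := div_pos hBpos hK₀pos
      refine ⟨hlpos, 1, n + 2, le_rfl, by omega, by simp, ?_⟩
      rw [hσ' 1 (n + 2) _ hlpos, hρ₀one]
      field_simp
      ring
  -- bounded away from zero
  have hc : ∃ c > (0 : ℝ), ∀ l ∈ Λ, c ≤ l := by
    rcases Set.eq_empty_or_nonempty (Λ ∩ Set.Iic 1) with hE | hNE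
    · refine ⟨1, one_pos, ?_⟩
      intro l hl
      by_contra h
      exact Set.eq_empty_iff_forall_notMem.mp hE l ⟨hl, le_of_lt (lt_of_not_ge h)⟩
    · obtain ⟨c, hcT, hcmin⟩ := Set.exists_min_image _ id (hΛfin 1) hNE
      refine ⟨c, hΛpos c hcT.1, ?_⟩
      intro l hl
      by_cases h : l ≤ 1
      · exact hcmin l ⟨hl, h⟩
      · exact le_trans hcT.2 (le_of_not_ge h)
  -- no accumulation points
  have hacc : ∀ x : ℝ, 0 < x → ∃ ε > (0 : ℝ), ∀ l ∈ Λ, l ≠ x → ε ≤ |l - x| := by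
    intro x hx
    have hFfin : ((Λ ∩ Set.Iic (x + 1)) \ {x}).Finite := (hΛfin (x + 1)).diff
    rcases Set.eq_empty_or_nonempty ((Λ ∩ Set.Iic (x + 1)) \ {x}) with hE | hNE
    · refine ⟨1, one_pos, ?_⟩
      intro l hl hlx
      by_cases h : l ≤ x + 1
      · exfalso
        exact Set.eq_empty_iff_forall_notMem.mp hE l ⟨⟨hl, h⟩, hlx⟩
      · rw [abs_of_pos (by linarith [lt_of_not_ge h])]
        linarith [lt_of_not_ge h]
    · obtain ⟨l₀, hl₀F, hl₀min⟩ :=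
        Set.exists_min_image _ (fun l => |l - x|) hFfin hNE
      have hl₀x : l₀ ≠ x := hl₀F.2
      have hεpos : 0 < |l₀ - x| := abs_pos.mpr (sub_ne_zero.mpr hl₀x)
      refine ⟨min |l₀ - x| 1, lt_min hεpos one_pos, ?_⟩
      intro l hl hlx
      by_cases h : l ≤ x + 1
      · exact le_trans (min_le_left _ _) (hl₀min l ⟨⟨hl, h⟩, hlx⟩)
      · have hgt : 1 < l - x := by linarith [lt_of_not_ge h]
        rw [abs_of_pos (show (0:ℝ) < l - x by linarith)]
        exact le_trans (min_le_right _ _) (le_of_lt hgt)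
  -- unbounded
  have hunbdd : ¬ BddAbove Λ := by
    rintro ⟨M, hM⟩
    apply hΛinf
    refine (hΛfin M).subset ?_
    intro l hl
    exact ⟨hl, hM hl⟩
  refine ⟨hiff, hΛinf, hc, hacc, hunbdd, aux_enum_12 Λ hΛfin hΛinf⟩
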